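/- Let k be a field and f, g : C → D homomorphisms of (non-counital) k-coalgebras with C conilpotent. Let E = ⋂_{p,q≥0} Ker((1^⊗p ⊗ (f−g) ⊗ 1^⊗q) ∘ Δ^(p+1+q)) ⊆ C, which is a subcoalgebra. Then E with the inclusion e : E → C is an equalizer of f and g in the category of conilpotent k-coalgebras: whenever h : B → C is a coalgebra homomorphism from a coalgebra B with f ∘ h = g ∘ h, then h factors uniquely through e. -/

import Mathlib

open TensorProduct LinearMap

structure ModB (k : Type) [CommRing k] where
  carrier : Type
  [ag : AddCommGroup carrier]
  [mo : Module k carrier]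

attribute [instance] ModB.ag ModB.mo

variable (k : Type) [CommRing k]

/-- Iterated tensor power: `TP k C n` has `n+1` factors of `C`. -/
noncomputable def TP (C : Type) [AddCommGroup C] [Module k C] : ℕ → ModB k
  | 0 => ⟨C⟩
  | n + 1 => ⟨C ⊗[k] (TP C n).carrier⟩

variable {k}
variable {C D : Type} [AddCommGroup C] [Module k C] [AddCommGroup D] [Module k D]

/-- `iterΔ Δ n` is the `n`-fold iterate `Δ^(n+1) : C → C^{⊗(n+1)}`. -/
noncomputable def iterΔ (Δ : C →ₗ[k] C ⊗[k] C) : ∀ n, C →ₗ[k] (TP k C n).carrier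
  | 0 => LinearMap.id
  | n + 1 => (TensorProduct.map LinearMap.id (iterΔ Δ n)).comp Δ

/-- `n+1`-fold tensor power of a linear map. -/
noncomputable def powMap (f : C →ₗ[k] D) : ∀ n, (TP k C n).carrier →ₗ[k] (TP k D n).carrier
  | 0 => f
  | n + 1 => TensorProduct.map f (powMap f n)

/-- Coassociativity. -/
def Coassoc (Δ : C →ₗ[k] C ⊗[k] C) : Prop :=
  (TensorProduct.assoc k C C C).toLinearMap ∘ₗ (TensorProduct.map Δ LinearMap.id) ∘ₗ Δ
    = (TensorProduct.map LinearMap.id Δ) ∘ₗ Δ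

/-- A (non-counital) coalgebra, bundled. -/
structure NCCoalg (k : Type) [CommRing k] where
  carrier : Type
  [ag : AddCommGroup carrier]
  [mo : Module k carrier]
  Δ : carrier →ₗ[k] carrier ⊗[k] carrier
  coassoc : Coassoc Δ

attribute [instance] NCCoalg.ag NCCoalg.mo

def IsCoalgHom (A B : NCCoalg k) (f : A.carrier →ₗ[k] B.carrier) : Prop :=
  B.Δ ∘ₗ f = (TensorProduct.map f f) ∘ₗ A.Δ

def Conilpotent (A : NCCoalg k) : Prop :=
  ∀ t : A.carrier, ∃ n, iterΔ A.Δ n t = 0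

/-- Cast between tensor powers of equal length. -/
noncomputable def TPcast {m n : ℕ} (h : m = n) :
    (TP k C m).carrier ≃ₗ[k] (TP k C n).carrier := by
  subst h; exact LinearEquiv.refl k _

variable (k C) in
/-- `Tail M q` is `M ⊗ C^{⊗q}` (right-nested). -/
noncomputable def Tail (M : Type) [AddCommGroup M] [Module k M] : ℕ → ModB k
  | 0 => ⟨M⟩
  | q + 1 => ⟨M ⊗[k] (TP k C q).carrier⟩

/-- `φ ⊗ 1^{⊗q} : C^{⊗(q+1)} → M ⊗ C^{⊗q}`, applying `φ` to the first factor. -/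
noncomputable def tailMap {M : Type} [AddCommGroup M] [Module k M] (φ : C →ₗ[k] M) :
    ∀ q, (TP k C q).carrier →ₗ[k] (Tail k C M q).carrier
  | 0 => φ
  | q + 1 =>
    (TensorProduct.map φ LinearMap.id
      : (C ⊗[k] (TP k C q).carrier) →ₗ[k] (M ⊗[k] (TP k C q).carrier))

variable (k C) in
/-- `Mix M p q` is `C^{⊗p} ⊗ M ⊗ C^{⊗q}` (right-nested). -/
noncomputable def Mix (M : Type) [AddCommGroup M] [Module k M] : ℕ → ℕ → ModB k
  | 0, q => Tail k C M q
  | p + 1, q => ⟨C ⊗[k] (Mix M p q).carrier⟩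

/-- `1^{⊗p} ⊗ φ ⊗ 1^{⊗q} : C^{⊗(p+1+q)} → C^{⊗p} ⊗ M ⊗ C^{⊗q}`
(the domain has `p+q+1` factors, i.e. is `TP k C (p+q)`). -/
noncomputable def sandwich {M : Type} [AddCommGroup M] [Module k M] (φ : C →ₗ[k] M) :
    ∀ p q, (TP k C (p + q)).carrier →ₗ[k] (Mix k C M p q).carrier
  | 0, q => (tailMap φ q) ∘ₗ (TPcast (by omega : 0 + q = q)).toLinearMap
  | p + 1, q =>
    (TensorProduct.map LinearMap.id (sandwich φ p q)
        : (C ⊗[k] (TP k C (p + q)).carrier) →ₗ[k] (C ⊗[k] (Mix k C M p q).carrier)) ∘ₗ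
      (TPcast (by omega : (p + 1) + q = (p + q) + 1)).toLinearMap

/-! ### Auxiliary machinery -/

section Aux

variable {M B : Type} [AddCommGroup M] [Module k M] [AddCommGroup B] [Module k B]

lemma lTensor_eq (f : M →ₗ[k] B) (P : Type) [AddCommGroup P] [Module k P] :
    LinearMap.lTensor P f = TensorProduct.map LinearMap.id f := rfl

lemma rTensor_eq (f : M →ₗ[k] B) (P : Type) [AddCommGroup P] [Module k P] :
    LinearMap.rTensor P f = TensorProduct.map f LinearMap.id := rfl

lemma TPcast_iterΔ (Δ : C →ₗ[k] C ⊗[k] C) {m n : ℕ} (h : m = n) :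
    (TPcast h).toLinearMap ∘ₗ iterΔ Δ m = iterΔ Δ n := by
  subst h; rfl

lemma TPcast_powMap (f : C →ₗ[k] D) {m n : ℕ} (h : m = n) :
    (TPcast h).toLinearMap ∘ₗ powMap f m = powMap f n ∘ₗ (TPcast h).toLinearMap := by
  subst h; rfl

/-- If `h` is a coalgebra morphism then iterated comultiplication commutes with it. -/
lemma iter_comp_hom (ΔB : B →ₗ[k] B ⊗[k] B) (Δ : C →ₗ[k] C ⊗[k] C) (h : B →ₗ[k] C)
    (hh : Δ ∘ₗ h = TensorProduct.map h h ∘ₗ ΔB) (n : ℕ) :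
    iterΔ Δ n ∘ₗ h = powMap h n ∘ₗ iterΔ ΔB n := by
  induction n with
  | zero => rfl
  | succ n ih =>
    calc (TensorProduct.map LinearMap.id (iterΔ Δ n) ∘ₗ Δ) ∘ₗ h
        = TensorProduct.map LinearMap.id (iterΔ Δ n) ∘ₗ (Δ ∘ₗ h) := by
          rw [LinearMap.comp_assoc]
      _ = (TensorProduct.map LinearMap.id (iterΔ Δ n) ∘ₗ TensorProduct.map h h) ∘ₗ ΔB := by
          rw [hh, LinearMap.comp_assoc]
      _ = TensorProduct.map h (iterΔ Δ n ∘ₗ h) ∘ₗ ΔB := by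
          rw [← TensorProduct.map_comp, LinearMap.id_comp]
      _ = TensorProduct.map h (powMap h n ∘ₗ iterΔ ΔB n) ∘ₗ ΔB := by rw [ih]
      _ = (TensorProduct.map h (powMap h n) ∘ₗ
            TensorProduct.map LinearMap.id (iterΔ ΔB n)) ∘ₗ ΔB := by
          rw [← TensorProduct.map_comp, LinearMap.comp_id]
      _ = TensorProduct.map h (powMap h n) ∘ₗ
            (TensorProduct.map LinearMap.id (iterΔ ΔB n) ∘ₗ ΔB) := by
          rw [LinearMap.comp_assoc]

lemma tailMap_powMap (φ : C →ₗ[k] M) (h : B →ₗ[k] C) (h0 : φ ∘ₗ h = 0) (q : ℕ) :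
    tailMap φ q ∘ₗ powMap h q = 0 := by
  cases q with
  | zero => exact h0
  | succ q =>
    show TensorProduct.map φ LinearMap.id ∘ₗ TensorProduct.map h (powMap h q) = 0
    rw [← TensorProduct.map_comp, h0, TensorProduct.map_zero_left]

lemma sandwich_powMap (φ : C →ₗ[k] M) (h : B →ₗ[k] C) (h0 : φ ∘ₗ h = 0) :
    ∀ p q, sandwich φ p q ∘ₗ powMap h (p + q) = 0
  | 0, q => by
    show (tailMap φ q ∘ₗ (TPcast (by omega : 0 + q = q)).toLinearMap) ∘ₗ powMap h (0 + q) = 0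
    rw [LinearMap.comp_assoc, TPcast_powMap h, ← LinearMap.comp_assoc,
      tailMap_powMap φ h h0 q, LinearMap.zero_comp]
  | p + 1, q => by
    show (TensorProduct.map LinearMap.id (sandwich φ p q) ∘ₗ
        (TPcast (by omega : (p + 1) + q = (p + q) + 1)).toLinearMap) ∘ₗ
        powMap h ((p + 1) + q) = 0
    erw [LinearMap.comp_assoc, TPcast_powMap h, ← LinearMap.comp_assoc]
    have hz : TensorProduct.map LinearMap.id (sandwich φ p q) ∘ₗ powMap h ((p + q) + 1) = 0 := by
      show TensorProduct.map LinearMap.id (sandwich φ p q) ∘ₗ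
        TensorProduct.map h (powMap h (p + q)) = 0
      rw [← TensorProduct.map_comp, sandwich_powMap φ h h0 p q, TensorProduct.map_zero_right]
    erw [hz, LinearMap.zero_comp]

/-- Appending one factor of `C` at the right of a tensor power. -/
noncomputable def appT : ∀ n : ℕ, ((TP k C n).carrier ⊗[k] C) →ₗ[k] (TP k C (n + 1)).carrier
  | 0 => LinearMap.id
  | n + 1 =>
    TensorProduct.map LinearMap.id (appT n) ∘ₗ
      (TensorProduct.assoc k C (TP k C n).carrier C).toLinearMap

variable (k C) in
/-- Appending one factor of `C` at the right of a `Tail`. -/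
noncomputable def appTail (M : Type) [AddCommGroup M] [Module k M] :
    ∀ q : ℕ, ((Tail k C M q).carrier ⊗[k] C) →ₗ[k] (Tail k C M (q + 1)).carrier
  | 0 => LinearMap.id
  | q + 1 =>
    TensorProduct.map LinearMap.id (appT q) ∘ₗ
      (TensorProduct.assoc k M (TP k C q).carrier C).toLinearMap

variable (k C) in
/-- Appending one factor of `C` at the right of a `Mix`. -/
noncomputable def appMix (M : Type) [AddCommGroup M] [Module k M] :
    ∀ p q : ℕ, ((Mix k C M p q).carrier ⊗[k] C) →ₗ[k] (Mix k C M p (q + 1)).carrier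
  | 0, q => appTail k C M q
  | p + 1, q =>
    TensorProduct.map LinearMap.id (appMix M p q) ∘ₗ
      (TensorProduct.assoc k C (Mix k C M p q).carrier C).toLinearMap

/-- Generalized coassociativity: `Δ^{(n+1)} = (Δ^{(n)} ⊗ 1) ∘ Δ` up to re-association. -/
lemma appT_iter (Δ : C →ₗ[k] C ⊗[k] C) (hc : Coassoc Δ) :
    ∀ n, appT n ∘ₗ TensorProduct.map (iterΔ Δ n) LinearMap.id ∘ₗ Δ = iterΔ Δ (n + 1)
  | 0 => by
    show LinearMap.id ∘ₗ TensorProduct.map LinearMap.id LinearMap.id ∘ₗ Δ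
        = TensorProduct.map LinearMap.id LinearMap.id ∘ₗ Δ
    rw [LinearMap.id_comp]
  | n + 1 => by
    have IH := appT_iter Δ hc n
    show TensorProduct.map LinearMap.id (appT n) ∘ₗ
        ((TensorProduct.assoc k C (TP k C n).carrier C).toLinearMap ∘ₗ
        (TensorProduct.map (TensorProduct.map LinearMap.id (iterΔ Δ n) ∘ₗ Δ) LinearMap.id ∘ₗ Δ))
        = TensorProduct.map LinearMap.id (iterΔ Δ (n + 1)) ∘ₗ Δ
    have h1 : TensorProduct.map
          (TensorProduct.map (LinearMap.id : C →ₗ[k] C) (iterΔ Δ n) ∘ₗ Δ)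
          (LinearMap.id : C →ₗ[k] C)
        = TensorProduct.map (TensorProduct.map LinearMap.id (iterΔ Δ n)) LinearMap.id ∘ₗ
            TensorProduct.map Δ LinearMap.id := by
      rw [← TensorProduct.map_comp, LinearMap.id_comp]
    have h2 := TensorProduct.map_map_comp_assoc_eq (R := k)
      (LinearMap.id : C →ₗ[k] C) (iterΔ Δ n) (LinearMap.id : C →ₗ[k] C)
    -- h2 : map id (map (iterΔ n) id) ∘ₗ assoc = assoc ∘ₗ map (map id (iterΔ n)) id
    have key : (TensorProduct.assoc k C (TP k C n).carrier C).toLinearMap ∘ₗ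
          (TensorProduct.map (TensorProduct.map LinearMap.id (iterΔ Δ n)) LinearMap.id ∘ₗ
            (TensorProduct.map Δ LinearMap.id ∘ₗ Δ))
        = TensorProduct.map LinearMap.id (TensorProduct.map (iterΔ Δ n) LinearMap.id) ∘ₗ
            (TensorProduct.map LinearMap.id Δ ∘ₗ Δ) := by
      rw [← LinearMap.comp_assoc, ← h2, LinearMap.comp_assoc]
      rw [show (TensorProduct.assoc k C C C).toLinearMap ∘ₗ
          (TensorProduct.map Δ LinearMap.id ∘ₗ Δ)
          = TensorProduct.map LinearMap.id Δ ∘ₗ Δ from hc]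
    rw [h1]
    simp only [LinearMap.comp_assoc]
    rw [key]
    rw [← LinearMap.comp_assoc, ← TensorProduct.map_comp,
      ← LinearMap.comp_assoc, ← TensorProduct.map_comp, LinearMap.id_comp, LinearMap.id_comp]
    simp only [LinearMap.comp_assoc]
    rw [IH]

lemma tailMap_appT (φ : C →ₗ[k] M) :
    ∀ q, tailMap φ (q + 1) ∘ₗ appT q
      = appTail k C M q ∘ₗ TensorProduct.map (tailMap φ q) LinearMap.id
  | 0 => by
    show TensorProduct.map φ LinearMap.id ∘ₗ LinearMap.id
        = LinearMap.id ∘ₗ TensorProduct.map φ LinearMap.id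
    rw [LinearMap.id_comp, LinearMap.comp_id]
  | q + 1 => by
    show TensorProduct.map φ LinearMap.id ∘ₗ
        (TensorProduct.map LinearMap.id (appT q) ∘ₗ
          (TensorProduct.assoc k C (TP k C q).carrier C).toLinearMap)
      = (TensorProduct.map LinearMap.id (appT q) ∘ₗ
          (TensorProduct.assoc k M (TP k C q).carrier C).toLinearMap) ∘ₗ
        TensorProduct.map (TensorProduct.map φ LinearMap.id) LinearMap.id
    rw [← LinearMap.comp_assoc, ← TensorProduct.map_comp, LinearMap.comp_id, LinearMap.id_comp]
    rw [LinearMap.comp_assoc, ← TensorProduct.map_map_comp_assoc_eq φ LinearMap.id LinearMap.id]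
    rw [TensorProduct.map_id, ← LinearMap.comp_assoc, ← TensorProduct.map_comp,
      LinearMap.id_comp, LinearMap.comp_id]

/-- The composite map `(1^{⊗p} ⊗ φ ⊗ 1^{⊗q}) ∘ Δ^{(p+1+q)}` defining the equalizer. -/
noncomputable def Kmap (Δ : C →ₗ[k] C ⊗[k] C) (φ : C →ₗ[k] M) (p q : ℕ) :
    C →ₗ[k] (Mix k C M p q).carrier :=
  sandwich φ p q ∘ₗ iterΔ Δ (p + q)

lemma Kmap_zero (Δ : C →ₗ[k] C ⊗[k] C) (φ : C →ₗ[k] M) (q : ℕ) :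
    Kmap Δ φ 0 q = tailMap φ q ∘ₗ iterΔ Δ q := by
  show (tailMap φ q ∘ₗ (TPcast (by omega : 0 + q = q)).toLinearMap) ∘ₗ iterΔ Δ (0 + q) = _
  rw [LinearMap.comp_assoc, TPcast_iterΔ Δ]

lemma Kmap_zero_zero (Δ : C →ₗ[k] C ⊗[k] C) (φ : C →ₗ[k] M) :
    Kmap Δ φ 0 0 = φ := by
  rw [Kmap_zero]
  rfl

lemma Kmap_succ_left (Δ : C →ₗ[k] C ⊗[k] C) (φ : C →ₗ[k] M) (p q : ℕ) :
    Kmap Δ φ (p + 1) q = TensorProduct.map LinearMap.id (Kmap Δ φ p q) ∘ₗ Δ := by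
  show (TensorProduct.map LinearMap.id (sandwich φ p q) ∘ₗ
      (TPcast (by omega : (p + 1) + q = (p + q) + 1)).toLinearMap) ∘ₗ iterΔ Δ ((p + 1) + q) = _
  erw [LinearMap.comp_assoc, TPcast_iterΔ Δ]
  show TensorProduct.map LinearMap.id (sandwich φ p q) ∘ₗ
      (TensorProduct.map LinearMap.id (iterΔ Δ (p + q)) ∘ₗ Δ) = _
  rw [← LinearMap.comp_assoc, ← TensorProduct.map_comp, LinearMap.id_comp]
  rfl

lemma Kmap_succ_right (Δ : C →ₗ[k] C ⊗[k] C) (hc : Coassoc Δ) (φ : C →ₗ[k] M) :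
    ∀ p q, Kmap Δ φ p (q + 1)
      = appMix k C M p q ∘ₗ TensorProduct.map (Kmap Δ φ p q) LinearMap.id ∘ₗ Δ
  | 0, q => by
    have h1 : Kmap Δ φ 0 (q + 1) = tailMap φ (q + 1) ∘ₗ iterΔ Δ (q + 1) := Kmap_zero Δ φ (q + 1)
    rw [h1, ← appT_iter Δ hc q, ← LinearMap.comp_assoc, ← LinearMap.comp_assoc,
      tailMap_appT φ q]
    show (appTail k C M q ∘ₗ TensorProduct.map (tailMap φ q) LinearMap.id ∘ₗ
        TensorProduct.map (iterΔ Δ q) LinearMap.id) ∘ₗ Δ = _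
    rw [← TensorProduct.map_comp, LinearMap.id_comp, Kmap_zero Δ φ q]
    show _ = (appTail k C M q ∘ₗ
        TensorProduct.map (tailMap φ q ∘ₗ iterΔ Δ q) LinearMap.id) ∘ₗ Δ
    rfl
  | p + 1, q => by
    rw [Kmap_succ_left, Kmap_succ_right Δ hc φ p q, Kmap_succ_left]
    -- LHS: map id (appMix p q ∘ₗ map (Kmap p q) id ∘ₗ Δ) ∘ₗ Δ
    -- RHS: appMix (p+1) q ∘ₗ map (map id (Kmap p q) ∘ₗ Δ) id ∘ₗ Δ
    have h1 : TensorProduct.map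
          (TensorProduct.map (LinearMap.id : C →ₗ[k] C) (Kmap Δ φ p q) ∘ₗ Δ)
          (LinearMap.id : C →ₗ[k] C)
        = TensorProduct.map (TensorProduct.map LinearMap.id (Kmap Δ φ p q)) LinearMap.id ∘ₗ
            TensorProduct.map Δ LinearMap.id := by
      rw [← TensorProduct.map_comp, LinearMap.id_comp]
    have h2 := TensorProduct.map_map_comp_assoc_eq (R := k)
      (LinearMap.id : C →ₗ[k] C) (Kmap Δ φ p q) (LinearMap.id : C →ₗ[k] C)
    have key : (TensorProduct.assoc k C (Mix k C M p q).carrier C).toLinearMap ∘ₗ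
          (TensorProduct.map (TensorProduct.map LinearMap.id (Kmap Δ φ p q)) LinearMap.id ∘ₗ
            (TensorProduct.map Δ LinearMap.id ∘ₗ Δ))
        = TensorProduct.map LinearMap.id (TensorProduct.map (Kmap Δ φ p q) LinearMap.id) ∘ₗ
            (TensorProduct.map LinearMap.id Δ ∘ₗ Δ) := by
      rw [← LinearMap.comp_assoc, ← h2, LinearMap.comp_assoc]
      rw [show (TensorProduct.assoc k C C C).toLinearMap ∘ₗ
          (TensorProduct.map Δ LinearMap.id ∘ₗ Δ)
          = TensorProduct.map LinearMap.id Δ ∘ₗ Δ from hc]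
    show TensorProduct.map LinearMap.id
        (appMix k C M p q ∘ₗ TensorProduct.map (Kmap Δ φ p q) LinearMap.id ∘ₗ Δ) ∘ₗ Δ
      = TensorProduct.map LinearMap.id (appMix k C M p q) ∘ₗ
          ((TensorProduct.assoc k C (Mix k C M p q).carrier C).toLinearMap ∘ₗ
            (TensorProduct.map (TensorProduct.map LinearMap.id (Kmap Δ φ p q) ∘ₗ Δ)
              LinearMap.id ∘ₗ Δ))
    rw [h1]
    simp only [LinearMap.comp_assoc]
    rw [key]
    conv_rhs => rw [← LinearMap.comp_assoc, ← TensorProduct.map_comp, LinearMap.id_comp,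
      ← LinearMap.comp_assoc, ← TensorProduct.map_comp, LinearMap.id_comp]
    simp only [LinearMap.comp_assoc]

end Aux

section FieldAux

variable {F : Type} [Field F] {M N P Q : Type} [AddCommGroup M] [Module F M]
  [AddCommGroup N] [Module F N] [AddCommGroup P] [Module F P] [AddCommGroup Q] [Module F Q]

lemma map_inj {f : M →ₗ[F] N} {g : P →ₗ[F] Q} (hf : Function.Injective f)
    (hg : Function.Injective g) : Function.Injective (TensorProduct.map f g) := by
  have e : TensorProduct.map f g = (g.lTensor N) ∘ₗ (f.rTensor P) := by
    rw [LinearMap.lTensor_comp_rTensor]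
  rw [e, LinearMap.coe_comp]
  exact (Module.Flat.lTensor_preserves_injective_linearMap g hg).comp
    (Module.Flat.rTensor_preserves_injective_linearMap f hf)

lemma powMap_inj {f : M →ₗ[F] N} (hf : Function.Injective f) :
    ∀ n, Function.Injective (powMap f n)
  | 0 => hf
  | n + 1 => map_inj hf (powMap_inj hf n)

lemma appT_inj : ∀ n, Function.Injective (appT (k := F) (C := M) n)
  | 0 => fun _ _ h => h
  | n + 1 => by
    show Function.Injective (TensorProduct.map LinearMap.id (appT n) ∘ₗ
      (TensorProduct.assoc F M (TP F M n).carrier M).toLinearMap)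
    rw [LinearMap.coe_comp]
    exact (map_inj (fun _ _ h => h) (appT_inj n)).comp
      (TensorProduct.assoc F M (TP F M n).carrier M).injective

lemma appTail_inj : ∀ q, Function.Injective (appTail F M N q)
  | 0 => fun _ _ h => h
  | q + 1 => by
    show Function.Injective (TensorProduct.map LinearMap.id (appT q) ∘ₗ
      (TensorProduct.assoc F N (TP F M q).carrier M).toLinearMap)
    rw [LinearMap.coe_comp]
    exact (map_inj (fun _ _ h => h) (appT_inj q)).comp
      (TensorProduct.assoc F N (TP F M q).carrier M).injective

lemma appMix_inj : ∀ p q, Function.Injective (appMix F M N p q)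
  | 0, q => appTail_inj q
  | p + 1, q => by
    show Function.Injective (TensorProduct.map LinearMap.id (appMix F M N p q) ∘ₗ
      (TensorProduct.assoc F M (Mix F M N p q).carrier M).toLinearMap)
    rw [LinearMap.coe_comp]
    exact (map_inj (fun _ _ h => h) (appMix_inj p q)).comp
      (TensorProduct.assoc F M (Mix F M N p q).carrier M).injective

/-- Contraction of the first tensor factor against a functional. -/
noncomputable def sliceL (l : M →ₗ[F] F) : M ⊗[F] N →ₗ[F] N :=
  (TensorProduct.lid F N).toLinearMap ∘ₗ LinearMap.rTensor N l

/-- Contraction of the second tensor factor against a functional. -/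
noncomputable def sliceR (l : N →ₗ[F] F) : M ⊗[F] N →ₗ[F] M :=
  (TensorProduct.rid F M).toLinearMap ∘ₗ LinearMap.lTensor M l

@[simp] lemma sliceL_tmul (l : M →ₗ[F] F) (m : M) (n : N) :
    sliceL l (m ⊗ₜ[F] n) = l m • n := by simp [sliceL]

@[simp] lemma sliceR_tmul (l : N →ₗ[F] F) (m : M) (n : N) :
    sliceR l (m ⊗ₜ[F] n) = l n • m := by simp [sliceR]

lemma sliceL_nat (l : M →ₗ[F] F) (G : N →ₗ[F] P) :
    G ∘ₗ sliceL l = sliceL l ∘ₗ TensorProduct.map LinearMap.id G := by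
  apply TensorProduct.ext'
  intro m n
  simp

lemma sliceR_nat (l : N →ₗ[F] F) (G : M →ₗ[F] P) :
    G ∘ₗ sliceR l = sliceR l ∘ₗ TensorProduct.map G LinearMap.id := by
  apply TensorProduct.ext'
  intro m n
  simp

lemma eq_zero_of_sliceL (z : M ⊗[F] N) (h : ∀ l : M →ₗ[F] F, sliceL l z = 0) : z = 0 := by
  let b := Module.Free.chooseBasis F M
  set u := LinearMap.rTensor N (b.repr : M ≃ₗ[F] _).toLinearMap z with hu_def
  have hu : ∀ i, TensorProduct.finsuppScalarLeft F N _ u i = 0 := by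
    intro i
    rw [TensorProduct.finsuppScalarLeft_apply]
    have h1 : LinearMap.rTensor N (Finsupp.lapply i) u
        = LinearMap.rTensor N
            ((Finsupp.lapply i : _ →ₗ[F] F) ∘ₗ (b.repr : M ≃ₗ[F] _).toLinearMap) z := by
      rw [hu_def, ← LinearMap.rTensor_comp_apply]
    rw [h1]
    have h2 := h ((Finsupp.lapply i : (_ →₀ F) →ₗ[F] F) ∘ₗ (b.repr : M ≃ₗ[F] _).toLinearMap)
    rw [sliceL, LinearMap.comp_apply] at h2
    rw [show ((0 : N) = (TensorProduct.lid F N) 0) by simp] at h2 ⊢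
    exact h2
  have hu0 : u = 0 := by
    have : TensorProduct.finsuppScalarLeft F N _ u = 0 := by
      ext i; simpa using hu i
    exact (LinearEquiv.map_eq_zero_iff (TensorProduct.finsuppScalarLeft F N _)).mp this
  have hinj : Function.Injective (LinearMap.rTensor N (b.repr : M ≃ₗ[F] _).toLinearMap) :=
    fun x y hxy => (LinearEquiv.rTensor N (b.repr : M ≃ₗ[F] _)).injective hxy
  exact hinj (by rw [← hu_def, hu0, map_zero])

lemma eq_zero_of_sliceR (z : M ⊗[F] N) (h : ∀ l : N →ₗ[F] F, sliceR l z = 0) : z = 0 := by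
  have hc : ∀ l : N →ₗ[F] F, sliceL l (TensorProduct.comm F M N z) = 0 := by
    intro l
    have e : (sliceL l : N ⊗[F] M →ₗ[F] M) ∘ₗ (TensorProduct.comm F M N).toLinearMap
        = sliceR l := by
      apply TensorProduct.ext'
      intro m n
      simp
    have := LinearMap.congr_fun e z
    simp only [LinearMap.comp_apply] at this
    rw [show ((TensorProduct.comm F M N).toLinearMap z = TensorProduct.comm F M N z) from rfl]
      at this
    rw [this, h l]
  have h0 := eq_zero_of_sliceL _ hc
  exact (LinearEquiv.map_eq_zero_iff (TensorProduct.comm F M N)).mp h0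

end FieldAux

/-- for homomorphisms `f, g : C → D` of non-counital coalgebras with `C`
conilpotent, the subcoalgebra
`E = ⋂_{p,q≥0} Ker((1^{⊗p} ⊗ (f−g) ⊗ 1^{⊗q}) ∘ Δ^{(p+1+q)})`
together with the inclusion `e = E.subtype` is an equalizer of `f` and `g` in the
category of conilpotent coalgebras: `E` carries a (unique) coassociative, conilpotent
comultiplication `ΔE` making `e` a coalgebra homomorphism, `f ∘ e = g ∘ e`, and every
coalgebra homomorphism `h : B → C` from a conilpotent coalgebra `B` with
`f ∘ h = g ∘ h` factors uniquely through `e` by a coalgebra homomorphism. -/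
theorem equalizer_universal_property (k : Type) [Field k]
    (C D : Type) [AddCommGroup C] [Module k C] [AddCommGroup D] [Module k D]
    (ΔC : C →ₗ[k] C ⊗[k] C) (ΔD : D →ₗ[k] D ⊗[k] D)
    (hC : Coassoc ΔC) (hD : Coassoc ΔD)
    (hconil : ∀ t : C, ∃ n, iterΔ ΔC n t = 0)
    (f g : C →ₗ[k] D)
    (hf : ΔD ∘ₗ f = (TensorProduct.map f f) ∘ₗ ΔC)
    (hg : ΔD ∘ₗ g = (TensorProduct.map g g) ∘ₗ ΔC)
    (E : Submodule k C)
    (hE : E = ⨅ (p : ℕ) (q : ℕ),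
      LinearMap.ker ((sandwich (f - g) p q) ∘ₗ iterΔ ΔC (p + q))) :
    ∃ ΔE : E →ₗ[k] E ⊗[k] E,
      Coassoc ΔE ∧
      (TensorProduct.map E.subtype E.subtype) ∘ₗ ΔE = ΔC ∘ₗ E.subtype ∧
      (∀ t : E, ∃ n, iterΔ ΔE n t = 0) ∧
      f ∘ₗ E.subtype = g ∘ₗ E.subtype ∧
      ∀ (B : NCCoalg k), Conilpotent B →
        ∀ h : B.carrier →ₗ[k] C, ΔC ∘ₗ h = (TensorProduct.map h h) ∘ₗ B.Δ →
          f ∘ₗ h = g ∘ₗ h →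
            ∃! j : B.carrier →ₗ[k] E,
              ΔE ∘ₗ j = (TensorProduct.map j j) ∘ₗ B.Δ ∧ E.subtype ∘ₗ j = h := by
  classical
  -- membership characterization
  have hEmem : ∀ x : C, x ∈ E ↔ ∀ p q : ℕ, Kmap ΔC (f - g) p q x = 0 := by
    intro x
    rw [hE]
    simp only [Submodule.mem_iInf, LinearMap.mem_ker]
    exact Iff.rfl
  have hι_inj : Function.Injective E.subtype := E.injective_subtype
  have hmapιι_inj : Function.Injective (TensorProduct.map E.subtype E.subtype) :=
    map_inj hι_inj hι_inj
  -- both partial tensors of Δ of an element of E vanish against the defining maps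
  have hlT : ∀ x : C, x ∈ E → ∀ p q,
      TensorProduct.map LinearMap.id (Kmap ΔC (f - g) p q) (ΔC x) = 0 := by
    intro x hx p q
    have h2 : Kmap ΔC (f - g) (p + 1) q x = 0 := (hEmem x).mp hx (p + 1) q
    rw [Kmap_succ_left] at h2
    exact h2
  have hrT : ∀ x : C, x ∈ E → ∀ p q,
      TensorProduct.map (Kmap ΔC (f - g) p q) LinearMap.id (ΔC x) = 0 := by
    intro x hx p q
    have h2 : Kmap ΔC (f - g) p (q + 1) x = 0 := (hEmem x).mp hx p (q + 1)
    rw [Kmap_succ_right ΔC hC] at h2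
    have h3 : appMix k C D p q
        (TensorProduct.map (Kmap ΔC (f - g) p q) LinearMap.id (ΔC x)) = 0 := h2
    exact appMix_inj p q (by rw [map_zero]; exact h3)
  -- both slices of Δ of an element of E are in E
  have hsL : ∀ x : C, x ∈ E → ∀ l : C →ₗ[k] k, sliceL l (ΔC x) ∈ E := by
    intro x hx l
    rw [hEmem]
    intro p q
    have := LinearMap.congr_fun (sliceL_nat (F := k) l (Kmap ΔC (f - g) p q)) (ΔC x)
    simp only [LinearMap.comp_apply] at this
    rw [this, hlT x hx p q, map_zero]
  have hsR : ∀ x : C, x ∈ E → ∀ l : C →ₗ[k] k, sliceR l (ΔC x) ∈ E := by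
    intro x hx l
    rw [hEmem]
    intro p q
    have := LinearMap.congr_fun (sliceR_nat (F := k) l (Kmap ΔC (f - g) p q)) (ΔC x)
    simp only [LinearMap.comp_apply] at this
    rw [this, hrT x hx p q, map_zero]
  -- a projection onto E
  obtain ⟨W, hW⟩ := Submodule.exists_isCompl E
  set proj := E.linearProjOfIsCompl W hW with hproj
  set pr := E.subtype ∘ₗ proj with hpr
  set π := (LinearMap.id : C →ₗ[k] C) - pr with hπ
  have hπ_E : ∀ x : C, x ∈ E → π x = 0 := by
    intro x hx
    have hproj_x : proj x = ⟨x, hx⟩ := Submodule.linearProjOfIsCompl_apply_left hW ⟨x, hx⟩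
    rw [hπ]
    simp only [LinearMap.sub_apply, LinearMap.id_coe, id_eq, hpr, LinearMap.comp_apply,
      hproj_x, Submodule.coe_subtype, sub_self]
  -- key range fact
  have hrange : ∀ x : C, x ∈ E →
      ΔC x ∈ LinearMap.range (TensorProduct.map E.subtype E.subtype) := by
    intro x hx
    have hL0 : TensorProduct.map LinearMap.id π (ΔC x) = 0 := by
      apply eq_zero_of_sliceL
      intro l
      have := LinearMap.congr_fun (sliceL_nat (F := k) l π) (ΔC x)
      simp only [LinearMap.comp_apply] at this
      rw [← this]
      exact hπ_E _ (hsL x hx l)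
    have hR0 : TensorProduct.map π LinearMap.id (ΔC x) = 0 := by
      apply eq_zero_of_sliceR
      intro l
      have := LinearMap.congr_fun (sliceR_nat (F := k) l π) (ΔC x)
      simp only [LinearMap.comp_apply] at this
      rw [← this]
      exact hπ_E _ (hsR x hx l)
    have hsum : (LinearMap.id : C →ₗ[k] C) = pr + π := by
      rw [hπ, add_sub_cancel]
    have v1 : TensorProduct.map pr π (ΔC x) = 0 := by
      have e : TensorProduct.map pr π = pr.rTensor C ∘ₗ π.lTensor C := by
        rw [LinearMap.rTensor_comp_lTensor]
      rw [e, LinearMap.comp_apply]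
      rw [show π.lTensor C (ΔC x) = 0 from hL0, map_zero]
    have v2 : TensorProduct.map π pr (ΔC x) = 0 := by
      have e : TensorProduct.map π pr = pr.lTensor C ∘ₗ π.rTensor C := by
        rw [LinearMap.lTensor_comp_rTensor]
      rw [e, LinearMap.comp_apply]
      rw [show π.rTensor C (ΔC x) = 0 from hR0, map_zero]
    have v3 : TensorProduct.map π π (ΔC x) = 0 := by
      have e : TensorProduct.map π π = π.lTensor C ∘ₗ π.rTensor C := by
        rw [LinearMap.lTensor_comp_rTensor]
      rw [e, LinearMap.comp_apply]
      rw [show π.rTensor C (ΔC x) = 0 from hR0, map_zero]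
    have hdec : ΔC x = TensorProduct.map pr pr (ΔC x) := by
      conv_lhs => rw [show ΔC x = TensorProduct.map LinearMap.id LinearMap.id (ΔC x) from by
        rw [TensorProduct.map_id]; rfl]
      rw [hsum, TensorProduct.map_add_left, TensorProduct.map_add_right,
        TensorProduct.map_add_right, LinearMap.add_apply, LinearMap.add_apply,
        LinearMap.add_apply, v1, v2, v3, add_zero, add_zero, add_zero]
    rw [hdec, hpr, TensorProduct.map_comp]
    exact ⟨TensorProduct.map proj proj (ΔC x), rfl⟩
  -- construct ΔE
  let eqv := LinearEquiv.ofInjective (TensorProduct.map E.subtype E.subtype) hmapιι_inj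
  let ΔE : E →ₗ[k] E ⊗[k] E := eqv.symm.toLinearMap ∘ₗ
    LinearMap.codRestrict (LinearMap.range (TensorProduct.map E.subtype E.subtype))
      (ΔC ∘ₗ E.subtype) (fun y => hrange _ y.2)
  have heqv : ∀ z : LinearMap.range (TensorProduct.map E.subtype E.subtype),
      TensorProduct.map E.subtype E.subtype (eqv.symm z) = (z : C ⊗[k] C) := by
    intro z
    have h2 : (eqv (eqv.symm z) : C ⊗[k] C)
        = TensorProduct.map E.subtype E.subtype (eqv.symm z) := by
      rw [show eqv (eqv.symm z) = LinearEquiv.ofInjective (TensorProduct.map E.subtype E.subtype)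
        hmapιι_inj (eqv.symm z) from rfl, LinearEquiv.ofInjective_apply]
    rw [← h2, eqv.apply_symm_apply]
  have hΔE : TensorProduct.map E.subtype E.subtype ∘ₗ ΔE = ΔC ∘ₗ E.subtype := by
    apply LinearMap.ext
    intro y
    show TensorProduct.map E.subtype E.subtype (eqv.symm _) = ΔC (E.subtype y)
    rw [heqv]
    rfl
  -- coassociativity
  have hcoassoc : Coassoc ΔE := by
    have e1 := TensorProduct.map_map_comp_assoc_eq (R := k) E.subtype E.subtype E.subtype
    have e2 : TensorProduct.map (TensorProduct.map E.subtype E.subtype) E.subtype ∘ₗ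
        TensorProduct.map ΔE LinearMap.id
        = TensorProduct.map (ΔC ∘ₗ E.subtype) E.subtype := by
      rw [← TensorProduct.map_comp, hΔE, LinearMap.comp_id]
    have e3 : TensorProduct.map (ΔC ∘ₗ E.subtype) E.subtype
        = TensorProduct.map ΔC LinearMap.id ∘ₗ TensorProduct.map E.subtype E.subtype := by
      rw [← TensorProduct.map_comp, LinearMap.id_comp]
    have e4 : TensorProduct.map E.subtype (TensorProduct.map E.subtype E.subtype) ∘ₗ
        TensorProduct.map LinearMap.id ΔE
        = TensorProduct.map E.subtype (ΔC ∘ₗ E.subtype) := by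
      rw [← TensorProduct.map_comp, hΔE, LinearMap.comp_id]
    have e5 : TensorProduct.map E.subtype (ΔC ∘ₗ E.subtype)
        = TensorProduct.map LinearMap.id ΔC ∘ₗ TensorProduct.map E.subtype E.subtype := by
      rw [← TensorProduct.map_comp, LinearMap.id_comp]
    have cL : TensorProduct.map E.subtype (TensorProduct.map E.subtype E.subtype) ∘ₗ
        ((TensorProduct.assoc k E E E).toLinearMap ∘ₗ
          (TensorProduct.map ΔE LinearMap.id ∘ₗ ΔE))
        = (TensorProduct.assoc k C C C).toLinearMap ∘ₗ
          (TensorProduct.map ΔC LinearMap.id ∘ₗ (ΔC ∘ₗ E.subtype)) := by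
      rw [← LinearMap.comp_assoc, e1]
      simp only [LinearMap.comp_assoc]
      rw [← LinearMap.comp_assoc ΔE]
      rw [show TensorProduct.map (TensorProduct.map E.subtype E.subtype) E.subtype ∘ₗ
        TensorProduct.map ΔE LinearMap.id
        = TensorProduct.map ΔC LinearMap.id ∘ₗ TensorProduct.map E.subtype E.subtype from
        e2.trans e3]
      simp only [LinearMap.comp_assoc]
      rw [hΔE]
    have cR : TensorProduct.map E.subtype (TensorProduct.map E.subtype E.subtype) ∘ₗ
        (TensorProduct.map LinearMap.id ΔE ∘ₗ ΔE)
        = TensorProduct.map LinearMap.id ΔC ∘ₗ (ΔC ∘ₗ E.subtype) := by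
      rw [← LinearMap.comp_assoc]
      rw [show TensorProduct.map E.subtype (TensorProduct.map E.subtype E.subtype) ∘ₗ
        TensorProduct.map LinearMap.id ΔE
        = TensorProduct.map LinearMap.id ΔC ∘ₗ TensorProduct.map E.subtype E.subtype from
        e4.trans e5]
      simp only [LinearMap.comp_assoc]
      rw [hΔE]
    have hJ3 : Function.Injective
        (TensorProduct.map E.subtype (TensorProduct.map E.subtype E.subtype)) :=
      map_inj hι_inj hmapιι_inj
    apply LinearMap.ext
    intro t
    apply hJ3
    have hhC : (TensorProduct.assoc k C C C).toLinearMap ∘ₗ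
          (TensorProduct.map ΔC LinearMap.id ∘ₗ (ΔC ∘ₗ E.subtype))
        = TensorProduct.map LinearMap.id ΔC ∘ₗ (ΔC ∘ₗ E.subtype) := by
      have h' : ((TensorProduct.assoc k C C C).toLinearMap ∘ₗ
            (TensorProduct.map ΔC LinearMap.id ∘ₗ ΔC)) ∘ₗ E.subtype
          = (TensorProduct.map LinearMap.id ΔC ∘ₗ ΔC) ∘ₗ E.subtype := by
        rw [show (TensorProduct.assoc k C C C).toLinearMap ∘ₗ
          (TensorProduct.map ΔC LinearMap.id ∘ₗ ΔC)
          = TensorProduct.map LinearMap.id ΔC ∘ₗ ΔC from hC]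
      simpa only [LinearMap.comp_assoc] using h'
    have := LinearMap.congr_fun ((cL.trans hhC).trans cR.symm) t
    simpa only [LinearMap.comp_apply] using this
  -- conilpotency of E
  have hconilE : ∀ t : E, ∃ n, iterΔ ΔE n t = 0 := by
    intro t
    obtain ⟨n, hn⟩ := hconil (E.subtype t)
    refine ⟨n, powMap_inj hι_inj n ?_⟩
    have := LinearMap.congr_fun (iter_comp_hom ΔE ΔC E.subtype hΔE.symm n) t
    simp only [LinearMap.comp_apply] at this
    rw [← this, hn, map_zero]
  -- f and g agree on E
  have hfg_E : f ∘ₗ E.subtype = g ∘ₗ E.subtype := by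
    apply LinearMap.ext
    intro y
    have h0 : Kmap ΔC (f - g) 0 0 (E.subtype y) = 0 := (hEmem _).mp y.2 0 0
    rw [Kmap_zero_zero] at h0
    have : f (E.subtype y) - g (E.subtype y) = 0 := by
      exact (LinearMap.sub_apply f g _).symm.trans h0
    simpa [sub_eq_zero] using this
  refine ⟨ΔE, hcoassoc, hΔE, hconilE, hfg_E, ?_⟩
  -- universal property
  intro B _ h hhom hfgh
  have h0 : (f - g) ∘ₗ h = 0 := by
    rw [LinearMap.sub_comp, hfgh, sub_self]
  have hrangeh : ∀ x : B.carrier, h x ∈ E := by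
    intro x
    rw [hEmem]
    intro p q
    have hKh : Kmap ΔC (f - g) p q ∘ₗ h = 0 := by
      show (sandwich (f - g) p q ∘ₗ iterΔ ΔC (p + q)) ∘ₗ h = 0
      rw [LinearMap.comp_assoc, iter_comp_hom B.Δ ΔC h hhom, ← LinearMap.comp_assoc,
        sandwich_powMap (f - g) h h0, LinearMap.zero_comp]
    have := LinearMap.congr_fun hKh x
    simpa only [LinearMap.comp_apply, LinearMap.zero_apply] using this
  set j := LinearMap.codRestrict E h hrangeh with hj
  have hfac : E.subtype ∘ₗ j = h := by
    apply LinearMap.ext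
    intro x
    rfl
  have hhomj : ΔE ∘ₗ j = TensorProduct.map j j ∘ₗ B.Δ := by
    have c1 : TensorProduct.map E.subtype E.subtype ∘ₗ (ΔE ∘ₗ j)
        = TensorProduct.map h h ∘ₗ B.Δ := by
      rw [← LinearMap.comp_assoc, hΔE, LinearMap.comp_assoc, hfac, hhom]
    have c2 : TensorProduct.map E.subtype E.subtype ∘ₗ (TensorProduct.map j j ∘ₗ B.Δ)
        = TensorProduct.map h h ∘ₗ B.Δ := by
      rw [← LinearMap.comp_assoc, ← TensorProduct.map_comp, hfac]
    apply LinearMap.ext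
    intro x
    apply hmapιι_inj
    have := LinearMap.congr_fun (c1.trans c2.symm) x
    simpa only [LinearMap.comp_apply] using this
  refine ⟨j, ⟨hhomj, hfac⟩, ?_⟩
  intro j' hj'
  apply LinearMap.ext
  intro x
  apply hι_inj
  have h1 : E.subtype (j' x) = h x := by
    have := LinearMap.congr_fun hj'.2 x
    simpa only [LinearMap.comp_apply] using this
  have h2 : E.subtype (j x) = h x := by
    have := LinearMap.congr_fun hfac x
    simpa only [LinearMap.comp_apply] using this
  rw [h1, h2]
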